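/- Let R be an integral domain, n ≥ 1, and suppose x₁, x₂ ∈ R[[t]] both have zero constant term and satisfy x² − a·x + t ≡ 0 (mod t^n) for a unit a ∈ R. Then x₁ ≡ x₂ (mod t^n). -/

import Mathlib

open PowerSeries

theorem quadratic_unit_solution_unique_mod (R : Type*) [CommRing R] [IsDomain R]
    (n : ℕ) (hn : 1 ≤ n) (a : R) (ha : IsUnit a) (x₁ x₂ : PowerSeries R)
    (h₁0 : PowerSeries.constantCoeff x₁ = 0)
    (h₂0 : PowerSeries.constantCoeff x₂ = 0)
    (h₁ : x₁ ^ 2 - PowerSeries.C a * x₁ + PowerSeries.X ∈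
      Ideal.span {(PowerSeries.X : PowerSeries R) ^ n})
    (h₂ : x₂ ^ 2 - PowerSeries.C a * x₂ + PowerSeries.X ∈
      Ideal.span {(PowerSeries.X : PowerSeries R) ^ n}) :
    x₁ - x₂ ∈ Ideal.span {(PowerSeries.X : PowerSeries R) ^ n} := by
  have key : (x₁ + x₂ - PowerSeries.C a) * (x₁ - x₂) ∈
      Ideal.span {(PowerSeries.X : PowerSeries R) ^ n} := by
    have := Ideal.sub_mem _ h₁ h₂
    have heq : (x₁ ^ 2 - PowerSeries.C a * x₁ + PowerSeries.X) -
        (x₂ ^ 2 - PowerSeries.C a * x₂ + PowerSeries.X) =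
        (x₁ + x₂ - PowerSeries.C a) * (x₁ - x₂) := by ring
    rwa [heq] at this
  have hu : IsUnit (x₁ + x₂ - PowerSeries.C a) := by
    rw [PowerSeries.isUnit_iff_constantCoeff]
    simp [h₁0, h₂0, ha.neg]
  obtain ⟨u, hu⟩ := hu
  have : x₁ - x₂ = ↑u⁻¹ * ((x₁ + x₂ - PowerSeries.C a) * (x₁ - x₂)) := by
    rw [← hu, ← mul_assoc]
    simp
  rw [this]
  exact Ideal.mul_mem_left _ _ key
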